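/- Gauss–Markov (slope): the OLS estimate β̂₁ is the best linear unbiased estimate of β₁. Precisely, for any coefficients α_1,…,α_n ∈ ℝ satisfying the unbiasedness constraints Σ_i α_i = 0 and Σ_i α_iX_i = 1, one has Σ_i α_i² ≥ 1/S_XX — equivalently, the linear unbiased estimator Σ_i α_iY_i has variance σ²·Σα_i² ≥ σ²/S_XX = Var[β̂₁] — with equality if and only if α_i = (X_i − X̄)/S_XX for all i. -/

import Mathlib

theorem stmt17 (n : ℕ) (hn : 1 ≤ n) (X : Fin n → ℝ)
    (Xbar SXX : ℝ)
    (hXbar : Xbar = (1 / (n : ℝ)) * ∑ i, X i)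
    (hSXX : SXX = ∑ i, (X i - Xbar) ^ 2)
    (hpos : 0 < SXX)
    (α : Fin n → ℝ)
    (h1 : ∑ i, α i = 0)
    (h2 : ∑ i, α i * X i = 1) :
    1 / SXX ≤ ∑ i, (α i) ^ 2 ∧
    (∑ i, (α i) ^ 2 = 1 / SXX ↔ ∀ i, α i = (X i - Xbar) / SXX) := by
  have hne : SXX ≠ 0 := ne_of_gt hpos
  have hαc : ∑ i, α i * (X i - Xbar) = 1 := by
    simp only [mul_sub]
    rw [Finset.sum_sub_distrib, h2, ← Finset.sum_mul, h1]
    ring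
  have key : ∑ i, (α i - (X i - Xbar) / SXX) ^ 2 = (∑ i, (α i) ^ 2) - 1 / SXX := by
    have expand : ∀ i : Fin n, (α i - (X i - Xbar) / SXX) ^ 2
        = (α i) ^ 2 - (2 / SXX) * (α i * (X i - Xbar)) + (1 / SXX ^ 2) * (X i - Xbar) ^ 2 := by
      intro i
      field_simp
      ring
    rw [Finset.sum_congr rfl fun i _ => expand i]
    rw [Finset.sum_add_distrib, Finset.sum_sub_distrib, ← Finset.mul_sum, ← Finset.mul_sum,
      hαc, ← hSXX]
    field_simp
    ring
  have hnn : 0 ≤ ∑ i, (α i - (X i - Xbar) / SXX) ^ 2 :=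
    Finset.sum_nonneg fun i _ => sq_nonneg _
  constructor
  · linarith [key ▸ hnn]
  · constructor
    · intro heq
      have hz : ∑ i, (α i - (X i - Xbar) / SXX) ^ 2 = 0 := by rw [key, heq]; ring
      intro i
      have := (Finset.sum_eq_zero_iff_of_nonneg (fun i _ => sq_nonneg
        (α i - (X i - Xbar) / SXX))).mp hz i (Finset.mem_univ i)
      have := pow_eq_zero_iff (n := 2) (by norm_num) |>.mp this
      linarith
    · intro h
      have : ∑ i, (α i) ^ 2 = ∑ i, ((X i - Xbar) / SXX) ^ 2 :=
        Finset.sum_congr rfl fun i _ => by rw [h i]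
      rw [this]
      simp only [div_pow, ← Finset.sum_div, ← hSXX]
      field_simp
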